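/- Let K ~ PH(α, B)² be the square of a phase-type random variable (with invertible subgenerator B whose eigenvalues have negative real part). Then for u > 0, E[exp(−uK)] = √(π/u) · α' Φ(B/√(2u)) (−B) 1, where Φ(M) := exp(M²/2) N(M) and N is the matrix function obtained by applying the standard normal cumulative distribution function to the matrix argument (via spectral/holomorphic functional calculus). -/

import Mathlib

open Matrix MeasureTheory Real

section Aux

open NormedSpace

private lemma matrix_entry_norm_le {m : ℕ} (A : Matrix (Fin m) (Fin m) ℝ) (i j : Fin m) :
    letI := Matrix.linftyOpSemiNormedRing (α := ℝ) (n := Fin m)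
    ‖A i j‖ ≤ ‖A‖ := by
  letI := Matrix.linftyOpSemiNormedRing (α := ℝ) (n := Fin m)
  have h1 : ‖A i j‖₊ ≤ ∑ k, ‖A i k‖₊ :=
    Finset.single_le_sum (f := fun k => ‖A i k‖₊) (fun _ _ => zero_le) (Finset.mem_univ j)
  have h2 : (∑ k, ‖A i k‖₊) ≤ ‖A‖₊ := by
    rw [Matrix.linfty_opNNNorm_def]
    exact Finset.le_sup (f := fun i => ∑ k, ‖A i k‖₊) (Finset.mem_univ i)
  exact_mod_cast h1.trans h2

private lemma exp_entry_integrable {m : ℕ} [Nonempty (Fin m)]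
    (M : Matrix (Fin m) (Fin m) ℝ) (i j : Fin m) :
    IntegrableOn (fun s : ℝ => Real.exp (-s ^ 2 / 2) * (NormedSpace.exp (s • M)) i j)
      (Set.Ioi (0 : ℝ)) := by
  letI : SeminormedRing (Matrix (Fin m) (Fin m) ℝ) := Matrix.linftyOpSemiNormedRing
  letI : NormedRing (Matrix (Fin m) (Fin m) ℝ) := Matrix.linftyOpNormedRing
  letI : NormedAlgebra ℝ (Matrix (Fin m) (Fin m) ℝ) := Matrix.linftyOpNormedAlgebra
  haveI : NormOneClass (Matrix (Fin m) (Fin m) ℝ) := Matrix.linfty_opNormOneClass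
  set C : ℝ := ‖M‖ with hC
  have hC0 : 0 ≤ C := norm_nonneg _
  -- continuity of the entry
  have hcont : Continuous fun s : ℝ => (NormedSpace.exp (s • M)) i j := by
    have h1 : Continuous fun s : ℝ => NormedSpace.exp (s • M) :=
      (continuous_iff_continuousAt.2 fun x =>
        (NormedSpace.exp_analytic (𝕂 := ℝ) x).continuousAt).comp (continuous_id.smul continuous_const)
    exact ((continuous_apply j).comp (continuous_apply i)).comp h1
  -- norm bound on exp
  have hexp_le : ∀ X : Matrix (Fin m) (Fin m) ℝ, ‖NormedSpace.exp X‖ ≤ Real.exp ‖X‖ := by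
    intro X
    rw [NormedSpace.exp_eq_tsum ℝ]
    refine (norm_tsum_le_tsum_norm (NormedSpace.norm_expSeries_summable' X)).trans ?_
    have h1 : ∀ n : ℕ, ‖((n.factorial : ℝ))⁻¹ • X ^ n‖ ≤ ‖X‖ ^ n / (n.factorial : ℝ) := by
      intro n
      rw [norm_smul, norm_inv, Real.norm_natCast, div_eq_inv_mul]
      gcongr
      exact norm_pow_le X n
    refine (Summable.tsum_le_tsum h1 (NormedSpace.norm_expSeries_summable' X)
      (Real.summable_pow_div_factorial ‖X‖)).trans ?_
    rw [Real.exp_eq_exp_ℝ, NormedSpace.exp_eq_tsum_div]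
  refine Integrable.mono'
    (g := fun s => Real.exp (C ^ 2 / 2) * Real.exp (-(1 / 2 : ℝ) * (s - C) ^ 2)) ?_ ?_ ?_
  · exact (((integrable_exp_neg_mul_sq (by norm_num : (0:ℝ) < 1/2)).comp_sub_right
      C).const_mul _).integrableOn
  · exact ((Real.continuous_exp.comp (by continuity)).mul hcont).aestronglyMeasurable.restrict
  · rw [ae_restrict_iff' measurableSet_Ioi]
    filter_upwards with s hs
    have hs0 : (0 : ℝ) < s := hs
    have h1 : ‖(NormedSpace.exp (s • M)) i j‖ ≤ Real.exp (s * C) := by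
      refine (matrix_entry_norm_le _ i j).trans ((hexp_le _).trans ?_)
      rw [norm_smul, Real.norm_eq_abs, abs_of_pos hs0]
    rw [norm_mul, Real.norm_eq_abs, Real.abs_exp]
    calc Real.exp (-s ^ 2 / 2) * ‖(NormedSpace.exp (s • M)) i j‖
        ≤ Real.exp (-s ^ 2 / 2) * Real.exp (s * C) :=
          mul_le_mul_of_nonneg_left h1 (Real.exp_pos _).le
      _ = Real.exp (C ^ 2 / 2) * Real.exp (-(1 / 2 : ℝ) * (s - C) ^ 2) := by
          rw [← Real.exp_add, ← Real.exp_add]; congr 1; ring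

end Aux

/-- The matrix function `Φ(M) = exp(M²/2) N(M)`, where `N` is the standard normal CDF applied
to the matrix argument via functional calculus.  For a scalar `b` one has
`e^{b²/2} N(b) = (1/√(2π)) ∫₀^∞ e^{−s²/2} e^{sb} ds`, and this integral representation is the
functional-calculus extension to matrices (agreeing with the spectral definition). -/
noncomputable def matPhi {m : ℕ} (M : Matrix (Fin m) (Fin m) ℝ) : Matrix (Fin m) (Fin m) ℝ :=
  fun i j =>
    (Real.sqrt (2 * Real.pi))⁻¹ *
      ∫ s in Set.Ioi (0 : ℝ), Real.exp (-s ^ 2 / 2) * (NormedSpace.exp (s • M)) i j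

/-- Let `K = X²` where `X ~ PH(α, B)` (density `f(t) = −α' e^{tB} B 1` on
`(0,∞)`, `B` invertible subgenerator with eigenvalues of negative real part, `α'·1 = 1`).
Then for `u > 0`,
`E[exp(−uK)] = √(π/u) · α' Φ(B/√(2u)) (−B) 1` with `Φ(M) = exp(M²/2) N(M)` as above. -/
theorem laplace_transform_square_phaseType
    {m : ℕ} (B : Matrix (Fin m) (Fin m) ℝ) (α : Fin m → ℝ)
    (hBoff : ∀ i j, i ≠ j → 0 ≤ B i j)
    (hBrow : ∀ i, ∑ j, B i j ≤ 0)
    (hBeig : ∀ (lam : ℂ) (x : Fin m → ℂ), x ≠ 0 →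
        (B.map Complex.ofReal).mulVec x = lam • x → lam.re < 0)
    (hα : ∀ i, 0 ≤ α i) (hα1 : ∑ i, α i = 1)
    (u : ℝ) (hu : 0 < u) :
    ∫ t in Set.Ioi (0 : ℝ),
        Real.exp (-u * t ^ 2) * (-(α ⬝ᵥ (NormedSpace.exp (t • B) * B) *ᵥ fun _ => 1))
      = Real.sqrt (Real.pi / u) *
          (α ⬝ᵥ (matPhi ((Real.sqrt (2 * u))⁻¹ • B) * (-B)) *ᵥ fun _ => 1) := by
  -- `m ≠ 0`
  rcases Nat.eq_zero_or_pos m with hm | hm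
  · subst hm; simp at hα1
  haveI : Nonempty (Fin m) := Fin.pos_iff_nonempty.mp hm
  have h2u : (0 : ℝ) < 2 * u := by linarith
  have hs2u : 0 < Real.sqrt (2 * u) := Real.sqrt_pos.mpr h2u
  set c : ℝ := (Real.sqrt (2 * u))⁻¹ with hc
  have hcpos : 0 < c := inv_pos.mpr hs2u
  set M : Matrix (Fin m) (Fin m) ℝ := c • B with hM
  -- change of variables t = c * x
  have hcv :
      (∫ t in Set.Ioi (0 : ℝ),
          Real.exp (-u * t ^ 2) * (-(α ⬝ᵥ (NormedSpace.exp (t • B) * B) *ᵥ fun _ => 1)))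
        = c • ∫ x in Set.Ioi (0 : ℝ),
            Real.exp (-x ^ 2 / 2) * (-(α ⬝ᵥ (NormedSpace.exp (x • M) * B) *ᵥ fun _ => 1)) := by
    have h := MeasureTheory.integral_comp_mul_left_Ioi
      (fun t => Real.exp (-u * t ^ 2) *
        (-(α ⬝ᵥ (NormedSpace.exp (t • B) * B) *ᵥ fun _ => 1))) 0 hcpos
    rw [mul_zero] at h
    have heq : ∀ x : ℝ,
        Real.exp (-u * (c * x) ^ 2) *
            (-(α ⬝ᵥ (NormedSpace.exp ((c * x) • B) * B) *ᵥ fun _ => 1))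
          = Real.exp (-x ^ 2 / 2) *
            (-(α ⬝ᵥ (NormedSpace.exp (x • M) * B) *ᵥ fun _ => 1)) := by
      intro x
      have h1 : (c * x) • B = x • M := by rw [hM, smul_smul, mul_comm]
      have hcsq : c ^ 2 = (2 * u)⁻¹ := by
        rw [hc, ← Real.sqrt_inv, Real.sq_sqrt (by positivity)]
      have hinv : c ^ 2 * (2 * u) = 1 := by
        rw [hcsq]; exact inv_mul_cancel₀ h2u.ne'
      have h2 : -u * (c * x) ^ 2 = -x ^ 2 / 2 := by
        linear_combination (-(x ^ 2) / 2) * hinv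
      rw [h1, h2]
    simp_rw [heq] at h
    rw [h, smul_smul, mul_inv_cancel₀ hcpos.ne', one_smul]
  rw [hcv]
  -- expand the bilinear form under the integral
  have expand : ∀ (E : Matrix (Fin m) (Fin m) ℝ) (e : ℝ),
      e * (-(α ⬝ᵥ (E * B) *ᵥ fun _ => 1)) =
        ∑ i, ∑ j, ∑ k, α i * (e * E i j) * (-B j k) := by
    intro E e
    have h0 : (-(α ⬝ᵥ (E * B) *ᵥ fun _ => 1)) = ∑ i, ∑ j, ∑ k, α i * E i j * (-B j k) := by
      simp only [Matrix.mulVec, dotProduct, Matrix.mul_apply, mul_one]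
      rw [← Finset.sum_neg_distrib]
      refine Finset.sum_congr rfl fun i _ => ?_
      calc -(α i * ∑ k, ∑ j, E i j * B j k)
          = ∑ k, ∑ j, α i * E i j * (-B j k) := by
            rw [Finset.mul_sum, ← Finset.sum_neg_distrib]
            refine Finset.sum_congr rfl fun k _ => ?_
            rw [Finset.mul_sum, ← Finset.sum_neg_distrib]
            refine Finset.sum_congr rfl fun j _ => ?_
            ring
        _ = ∑ j, ∑ k, α i * E i j * (-B j k) := Finset.sum_comm
    rw [h0, Finset.mul_sum]
    refine Finset.sum_congr rfl fun i _ => ?_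
    rw [Finset.mul_sum]
    refine Finset.sum_congr rfl fun j _ => ?_
    rw [Finset.mul_sum]
    refine Finset.sum_congr rfl fun k _ => ?_
    ring
  -- integrability of each summand
  have hint : ∀ i j k : Fin m,
      IntegrableOn (fun x : ℝ =>
        α i * (Real.exp (-x ^ 2 / 2) * (NormedSpace.exp (x • M)) i j) * (-B j k))
        (Set.Ioi (0 : ℝ)) := fun i j k =>
    ((exp_entry_integrable M i j).const_mul (α i)).mul_const (-B j k)
  -- swap integral and sums
  have hswap :
      (∫ x in Set.Ioi (0 : ℝ),
          Real.exp (-x ^ 2 / 2) * (-(α ⬝ᵥ (NormedSpace.exp (x • M) * B) *ᵥ fun _ => 1)))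
        = ∑ i, ∑ j, ∑ k, α i *
            (∫ x in Set.Ioi (0 : ℝ),
              Real.exp (-x ^ 2 / 2) * (NormedSpace.exp (x • M)) i j) * (-B j k) := by
    simp_rw [expand]
    rw [MeasureTheory.integral_finset_sum _ fun i _ =>
      integrable_finset_sum _ fun j _ => integrable_finset_sum _ fun k _ => hint i j k]
    refine Finset.sum_congr rfl fun i _ => ?_
    rw [MeasureTheory.integral_finset_sum _ fun j _ =>
      integrable_finset_sum _ fun k _ => hint i j k]
    refine Finset.sum_congr rfl fun j _ => ?_
    rw [MeasureTheory.integral_finset_sum _ fun k _ => hint i j k]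
    refine Finset.sum_congr rfl fun k _ => ?_
    rw [MeasureTheory.integral_mul_const, MeasureTheory.integral_const_mul]
  rw [hswap]
  -- expand the RHS
  have hrhs :
      (α ⬝ᵥ (matPhi M * (-B)) *ᵥ fun _ => 1)
        = (Real.sqrt (2 * Real.pi))⁻¹ *
            ∑ i, ∑ j, ∑ k, α i *
              (∫ x in Set.Ioi (0 : ℝ),
                Real.exp (-x ^ 2 / 2) * (NormedSpace.exp (x • M)) i j) * (-B j k) := by
    simp only [Matrix.mulVec, dotProduct, Matrix.mul_apply, mul_one, matPhi,
      Matrix.neg_apply]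
    rw [Finset.mul_sum]
    refine Finset.sum_congr rfl fun i _ => ?_
    calc α i * ∑ k, ∑ j, (Real.sqrt (2 * Real.pi))⁻¹ *
            (∫ s in Set.Ioi (0:ℝ), Real.exp (-s ^ 2 / 2) * (NormedSpace.exp (s • M)) i j) *
            (-B j k)
        = ∑ k, ∑ j, (Real.sqrt (2 * Real.pi))⁻¹ * (α i *
            (∫ s in Set.Ioi (0:ℝ), Real.exp (-s ^ 2 / 2) * (NormedSpace.exp (s • M)) i j) *
            (-B j k)) := by
          rw [Finset.mul_sum]
          refine Finset.sum_congr rfl fun k _ => ?_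
          rw [Finset.mul_sum]
          refine Finset.sum_congr rfl fun j _ => ?_
          ring
      _ = ∑ j, ∑ k, (Real.sqrt (2 * Real.pi))⁻¹ * (α i *
            (∫ s in Set.Ioi (0:ℝ), Real.exp (-s ^ 2 / 2) * (NormedSpace.exp (s • M)) i j) *
            (-B j k)) := Finset.sum_comm
      _ = (Real.sqrt (2 * Real.pi))⁻¹ * ∑ j, ∑ k, α i *
            (∫ s in Set.Ioi (0:ℝ), Real.exp (-s ^ 2 / 2) * (NormedSpace.exp (s • M)) i j) *
            (-B j k) := by
          rw [Finset.mul_sum]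
          refine Finset.sum_congr rfl fun j _ => ?_
          rw [Finset.mul_sum]
  rw [hrhs]
  -- the constants agree
  have hconst : Real.sqrt (Real.pi / u) * (Real.sqrt (2 * Real.pi))⁻¹ = c := by
    have hπ : (0:ℝ) < Real.sqrt Real.pi := Real.sqrt_pos.mpr Real.pi_pos
    have h2 : (0:ℝ) < Real.sqrt 2 := Real.sqrt_pos.mpr two_pos
    have hup : (0:ℝ) < Real.sqrt u := Real.sqrt_pos.mpr hu
    rw [hc, Real.sqrt_div Real.pi_pos.le, Real.sqrt_mul (by norm_num : (0:ℝ) ≤ 2),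
      Real.sqrt_mul (by norm_num : (0:ℝ) ≤ 2)]
    field_simp
  rw [smul_eq_mul, ← mul_assoc, hconst]
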